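/- Let l be one of the logics K, D, T, K4, KD4, S4, K+5, D+5, T+5, K4+5, KD4+5, S4+5. A modal formula φ is complete for l if and only if for every two finite pointed models (M,a) and (M',a') for l with M,a ⊨ φ and M',a' ⊨ φ, it holds that (M,a) ∼_{P(φ)} (M',a'). -/
import Mathlib


/-- Modal formulas in negation normal form, as in the paper:
φ ::= ⊥ | ⊤ | p | ¬p | φ∧φ | φ∨φ | □φ | ◇φ. -/
inductive Form : Type where
  | bot : Form
  | top : Form
  | pos : ℕ → Form
  | npos : ℕ → Form
  | and : Form → Form → Form
  | or : Form → Form → Form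
  | box : Form → Form
  | dia : Form → Form
deriving DecidableEq

namespace Form

/-- Negation, defined as usual (by De Morgan dualities). -/
def neg : Form → Form
  | bot => top
  | top => bot
  | pos p => npos p
  | npos p => pos p
  | and φ ψ => or φ.neg ψ.neg
  | or φ ψ => and φ.neg ψ.neg
  | box φ => dia φ.neg
  | dia φ => box φ.neg

/-- Implication φ → ψ, defined as usual. -/
def imp (φ ψ : Form) : Form := or φ.neg ψ

/-- Bi-implication φ ↔ ψ, defined as usual. -/
def biimp (φ ψ : Form) : Form := and (imp φ ψ) (imp ψ φ)

/-- P(φ): the set of propositional variables occurring in φ. -/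
def vars : Form → Finset ℕ
  | bot => ∅
  | top => ∅
  | pos p => {p}
  | npos p => {p}
  | and φ ψ => φ.vars ∪ ψ.vars
  | or φ ψ => φ.vars ∪ ψ.vars
  | box φ => φ.vars
  | dia φ => φ.vars

/-- Modal depth. -/
def md : Form → ℕ
  | bot => 0
  | top => 0
  | pos _ => 0
  | npos _ => 0
  | and φ ψ => max φ.md ψ.md
  | or φ ψ => max φ.md ψ.md
  | box φ => φ.md + 1
  | dia φ => φ.md + 1

/-- sub(φ): the set of subformulas of φ. -/
def subf : Form → Finset Form
  | bot => {bot}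
  | top => {top}
  | pos p => {pos p}
  | npos p => {npos p}
  | and φ ψ => insert (and φ ψ) (φ.subf ∪ ψ.subf)
  | or φ ψ => insert (or φ ψ) (φ.subf ∪ ψ.subf)
  | box φ => insert (box φ) φ.subf
  | dia φ => insert (dia φ) φ.subf

/-- s̄ub(φ) = sub(φ) ∪ {¬ψ : ψ ∈ sub(φ)}. -/
def subBar (φ : Form) : Finset Form := φ.subf ∪ φ.subf.image neg

/-- □^k φ : k nested boxes. -/
def boxIter : ℕ → Form → Form
  | 0, φ => φ
  | n + 1, φ => box (boxIter n φ)

def isDia : Form → Bool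
  | dia _ => true
  | _ => false

def isBox : Form → Bool
  | box _ => true
  | _ => false

end Form

/-- Big conjunction over a finite set of formulas (⋀∅ = ⊤). -/
noncomputable def bigAnd (s : Finset Form) : Form := s.toList.foldr Form.and Form.top

/-- Big disjunction over a finite set of formulas (⋁∅ = ⊥). -/
noncomputable def bigOr (s : Finset Form) : Form := s.toList.foldr Form.or Form.bot

/-- th(a) = ⋀ a. -/
noncomputable def th (a : Finset Form) : Form := bigAnd a

/-- A finite Kripke model: a nonempty finite set of states, an accessibility
relation and a valuation. -/
structure Model : Type 1 where
  W : Type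
  nonempty : Nonempty W
  finite : Finite W
  R : W → W → Prop
  V : W → Set ℕ

/-- Satisfaction M,w ⊨ φ. -/
def Model.sat (M : Model) : M.W → Form → Prop
  | _, .bot => False
  | _, .top => True
  | w, .pos p => p ∈ M.V w
  | w, .npos p => p ∉ M.V w
  | w, .and φ ψ => M.sat w φ ∧ M.sat w ψ
  | w, .or φ ψ => M.sat w φ ∨ M.sat w ψ
  | w, .box φ => ∀ v, M.R w v → M.sat v φ
  | w, .dia φ => ∃ v, M.R w v ∧ M.sat v φ

/-- The six base logics K, D, T, K4, KD4, S4. -/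
inductive BaseLogic : Type where
  | K | D | T | K4 | KD4 | S4
deriving DecidableEq

/-- A logic: a base logic, possibly extended by axiom 5. -/
structure Logic : Type where
  base : BaseLogic
  has5 : Bool
deriving DecidableEq

def Logic.K : Logic := ⟨.K, false⟩
def Logic.D : Logic := ⟨.D, false⟩
def Logic.T : Logic := ⟨.T, false⟩
def Logic.K4 : Logic := ⟨.K4, false⟩
def Logic.KD4 : Logic := ⟨.KD4, false⟩
def Logic.S4 : Logic := ⟨.S4, false⟩

/-- l + 5. -/
def BaseLogic.plus5 (b : BaseLogic) : Logic := ⟨b, true⟩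

/-- M is a model for the logic l (frame conditions). -/
def Model.IsFor (M : Model) (l : Logic) : Prop :=
  (match l.base with
    | .K => True
    | .D => ∀ w, ∃ v, M.R w v
    | .T => ∀ w, M.R w w
    | .K4 => ∀ a b c, M.R a b → M.R b c → M.R a c
    | .KD4 => (∀ w, ∃ v, M.R w v) ∧ (∀ a b c, M.R a b → M.R b c → M.R a c)
    | .S4 => (∀ w, M.R w w) ∧ (∀ a b c, M.R a b → M.R b c → M.R a c))
  ∧ (l.has5 = true → ∀ a b c, M.R a b → M.R a c → M.R b c)

/-- φ is satisfiable for l: satisfied at some state of some finite model for l. -/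
def Satisfiable (l : Logic) (φ : Form) : Prop :=
  ∃ M : Model, M.IsFor l ∧ ∃ w : M.W, M.sat w φ

/-- φ is valid for l: satisfied at every state of every finite model for l. -/
def Valid (l : Logic) (φ : Form) : Prop :=
  ∀ M : Model, M.IsFor l → ∀ w : M.W, M.sat w φ

/-- φ is complete for l: for every ψ ∈ L(P(φ)), φ→ψ or φ→¬ψ is valid for l. -/
def Complete (l : Logic) (φ : Form) : Prop :=
  ∀ ψ : Form, ψ.vars ⊆ φ.vars → (Valid l (φ.imp ψ) ∨ Valid l (φ.imp ψ.neg))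

/-- Z is a bisimulation modulo P from M to M'. -/
def IsBisim (P : Set ℕ) (M M' : Model) (Z : M.W → M'.W → Prop) : Prop :=
  (∃ s s', Z s s') ∧
  ∀ s s', Z s s' →
    (M.V s ∩ P = M'.V s' ∩ P) ∧
    (∀ t, M.R s t → ∃ t', M'.R s' t' ∧ Z t t') ∧
    (∀ t', M'.R s' t' → ∃ t, M.R s t ∧ Z t t')

/-- (M,a) ∼_P (M',a'). -/
def Bisimilar (P : Set ℕ) (M : Model) (a : M.W) (M' : Model) (a' : M'.W) : Prop :=
  ∃ Z, IsBisim P M M' Z ∧ Z a a'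

/-- (M,a) ≡_P (M',a'): the two pointed models satisfy the same formulas of L(P). -/
def EquivP (P : Set ℕ) (M : Model) (a : M.W) (M' : Model) (a' : M'.W) : Prop :=
  ∀ φ : Form, ↑φ.vars ⊆ P → (M.sat a φ ↔ M'.sat a' φ)

/-- (M,s) is flat (for base logic l, with axiom 5): the carrier is {s}∪W and
R = R1 ∪ R2 with R1 ⊆ {s}×W, R2 an equivalence relation on W, and s ∈ W if
l ∈ {T,S4}. -/
def Flat (l : BaseLogic) (M : Model) (s : M.W) : Prop :=
  ∃ W : Set M.W, (∀ w, w = s ∨ w ∈ W) ∧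
    ∃ R1 R2 : M.W → M.W → Prop,
      (∀ x y, M.R x y ↔ (R1 x y ∨ R2 x y)) ∧
      (∀ x y, R1 x y → x = s ∧ y ∈ W) ∧
      (∀ x y, R2 x y → x ∈ W ∧ y ∈ W) ∧
      (∀ x ∈ W, R2 x x) ∧
      (∀ x y, R2 x y → R2 y x) ∧
      (∀ x y z, R2 x y → R2 y z → R2 x z) ∧
      ((l = .T ∨ l = .S4) → s ∈ W)

/-- A maximal state for l with respect to φ: a maximally l-consistent subset
of s̄ub(φ). -/
def MaxState (l : Logic) (φ : Form) (a : Finset Form) : Prop :=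
  a ⊆ φ.subBar ∧ Satisfiable l (th a) ∧ ∀ ψ ∈ φ.subf, ψ ∈ a ∨ ψ.neg ∈ a

/-- D(x) = {◇ψ : ◇ψ ∈ x}. -/
def DSet (x : Finset Form) : Finset Form := x.filter (fun ψ => ψ.isDia = true)

/-- B(x) = {□ψ : □ψ ∈ x}. -/
def BSet (x : Finset Form) : Finset Form := x.filter (fun ψ => ψ.isBox = true)

/-- A view: a parent-state and a finite set of children-states. -/
structure View : Type where
  parent : Finset Form
  children : Finset (Finset Form)

/-- The view is with respect to φ: all its states are subsets of s̄ub(φ). -/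
def View.WF (φ : Form) (S : View) : Prop :=
  S.parent ⊆ φ.subBar ∧ ∀ c ∈ S.children, c ⊆ φ.subBar

/-- A set of formulas is l-closed. -/
def LClosed (l : Logic) (P : Finset ℕ) (s : Finset Form) : Prop :=
  (∀ φ1 φ2 : Form, Form.and φ1 φ2 ∈ s → φ1 ∈ s ∧ φ2 ∈ s) ∧
  (∀ φ1 φ2 : Form, Form.or φ1 φ2 ∈ s → φ1 ∈ s ∨ φ2 ∈ s) ∧
  ((l.base = .T ∨ l.base = .S4) → ∀ ψ : Form, Form.box ψ ∈ s → ψ ∈ s) ∧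
  (∀ p ∈ P, Form.pos p ∈ s ∨ Form.npos p ∈ s)

/-- The view S is l-complete. -/
def ViewLComplete (l : Logic) (P : Finset ℕ) (S : View) : Prop :=
  LClosed l P S.parent ∧
  (∀ c ∈ S.children, LClosed l P c) ∧
  (∀ ψ : Form, Form.dia ψ ∈ S.parent → ∃ c ∈ S.children, ψ ∈ c) ∧
  (∀ ψ : Form, Form.box ψ ∈ S.parent → ∀ c ∈ S.children, ψ ∈ c) ∧
  ((l.base = .K4 ∨ l.base = .KD4 ∨ l.base = .S4) →
    ∀ ψ : Form, Form.box ψ ∈ S.parent → ∀ c ∈ S.children, Form.box ψ ∈ c) ∧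
  (l.base = .KD4 → S.children.Nonempty)

/-- The view S is consistent for l: every one of its states is consistent. -/
def ViewConsistent (l : Logic) (S : View) : Prop :=
  Satisfiable l (th S.parent) ∧ ∀ c ∈ S.children, Satisfiable l (th c)

/-- d = max{md(th(c')) : c' ∈ C(S)}. -/
noncomputable def childDepth (S : View) : ℕ := S.children.sup (fun c => (th c).md)

/-- A K-maximal child-state: a maximally K-consistent subset of s̄ub_d(φ). -/
def KMaxChild (φ : Form) (d : ℕ) (c : Finset Form) : Prop :=
  c ⊆ φ.subBar.filter (fun ψ => ψ.md ≤ d) ∧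
  Satisfiable Logic.K (th c) ∧
  ∀ ψ ∈ φ.subf, ψ.md ≤ d → (ψ ∈ c ∨ ψ.neg ∈ c)

/-- S' completes S (for logic l, with respect to φ). -/
def ViewCompletes (l : Logic) (φ : Form) (S' S : View) : Prop :=
  ViewLComplete l φ.vars S' ∧
  S.parent ⊆ S'.parent ∧
  (∀ a ∈ S.children, ∃ a' ∈ S'.children, a ⊆ a') ∧
  (l.base = .K → ∀ a' ∈ S'.children, KMaxChild φ (childDepth S') a') ∧
  (l.base ≠ .K → ∀ a' ∈ S'.children, MaxState l φ a')

/-- The depth-0 normal form ⋀_{p∈S} p ∧ ⋀_{p∈P∖S} ¬p. -/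
noncomputable def nf0 (P S : Finset ℕ) : Form :=
  Form.and (bigAnd (S.image Form.pos)) (bigAnd ((P \ S).image Form.npos))

/-- Fine's normal forms F_P^d. -/
noncomputable def NF (P : Finset ℕ) : ℕ → Set Form
  | 0 => { χ | ∃ S ⊆ P, χ = nf0 P S }
  | d + 1 => { χ | ∃ S : Finset Form, ↑S ⊆ NF P d ∧ ∃ S0 ⊆ P,
      χ = Form.and (nf0 P S0)
            (Form.and (bigAnd (S.image Form.dia)) (Form.box (bigOr S))) }

/-- φ is complete up to its depth for l. -/
def CompleteUpToDepth (l : Logic) (φ : Form) : Prop :=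
  ∀ ψ : Form, ψ.vars ⊆ φ.vars → ψ.md ≤ φ.md →
    (Valid l (φ.imp ψ) ∨ Valid l (φ.imp ψ.neg))

/- ===== Auxiliary lemmas for stmt1 ===== -/

open Classical

lemma Form.vars_neg (φ : Form) : φ.neg.vars = φ.vars := by
  induction φ <;> simp [Form.neg, Form.vars, *]

lemma Model.sat_neg (M : Model) : ∀ (φ : Form) (w : M.W),
    (M.sat w φ.neg ↔ ¬ M.sat w φ) := by
  intro φ
  induction φ with
  | bot => intro w; simp [Form.neg, Model.sat]
  | top => intro w; simp [Form.neg, Model.sat]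
  | pos p => intro w; simp [Form.neg, Model.sat]
  | npos p => intro w; simp [Form.neg, Model.sat]
  | and φ ψ ih1 ih2 => intro w; simp [Form.neg, Model.sat, ih1, ih2]; tauto
  | or φ ψ ih1 ih2 => intro w; simp [Form.neg, Model.sat, ih1, ih2]
  | box φ ih => intro w; simp [Form.neg, Model.sat, ih]
  | dia φ ih => intro w; simp [Form.neg, Model.sat, ih]

lemma Model.sat_imp (M : Model) (φ ψ : Form) (w : M.W) :
    M.sat w (φ.imp ψ) ↔ (M.sat w φ → M.sat w ψ) := by
  simp [Form.imp, Model.sat, Model.sat_neg]; tauto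

/-- Bisimilar states satisfy the same formulas over P. -/
lemma bisim_equiv {P : Set ℕ} {M M' : Model} {Z : M.W → M'.W → Prop}
    (hZ : IsBisim P M M' Z) :
    ∀ ψ : Form, ↑ψ.vars ⊆ P → ∀ s s', Z s s' → (M.sat s ψ ↔ M'.sat s' ψ) := by
  intro ψ
  induction ψ with
  | bot => intro _ s s' _; simp [Model.sat]
  | top => intro _ s s' _; simp [Model.sat]
  | pos p =>
      intro hv s s' hss
      have hp : p ∈ P := hv (by simp [Form.vars])
      have hV := (hZ.2 s s' hss).1
      simp only [Model.sat]
      constructor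
      · intro h; have : p ∈ M.V s ∩ P := ⟨h, hp⟩; rw [hV] at this; exact this.1
      · intro h; have : p ∈ M'.V s' ∩ P := ⟨h, hp⟩; rw [← hV] at this; exact this.1
  | npos p =>
      intro hv s s' hss
      have hp : p ∈ P := hv (by simp [Form.vars])
      have hV := (hZ.2 s s' hss).1
      simp only [Model.sat]
      constructor
      · intro h hc; exact h (by
          have : p ∈ M'.V s' ∩ P := ⟨hc, hp⟩; rw [← hV] at this; exact this.1)
      · intro h hc; exact h (by
          have : p ∈ M.V s ∩ P := ⟨hc, hp⟩; rw [hV] at this; exact this.1)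
  | and φ ψ ih1 ih2 =>
      intro hv s s' hss
      have h1 : ↑φ.vars ⊆ P := fun x hx => hv (by simp [Form.vars]; exact Or.inl hx)
      have h2 : ↑ψ.vars ⊆ P := fun x hx => hv (by simp [Form.vars]; exact Or.inr hx)
      simp only [Model.sat]
      rw [ih1 h1 s s' hss, ih2 h2 s s' hss]
  | or φ ψ ih1 ih2 =>
      intro hv s s' hss
      have h1 : ↑φ.vars ⊆ P := fun x hx => hv (by simp [Form.vars]; exact Or.inl hx)
      have h2 : ↑ψ.vars ⊆ P := fun x hx => hv (by simp [Form.vars]; exact Or.inr hx)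
      simp only [Model.sat]
      rw [ih1 h1 s s' hss, ih2 h2 s s' hss]
  | box φ ih =>
      intro hv s s' hss
      have h1 : ↑φ.vars ⊆ P := by simpa [Form.vars] using hv
      simp only [Model.sat]
      constructor
      · intro h t' ht'
        obtain ⟨t, ht, hZt⟩ := (hZ.2 s s' hss).2.2 t' ht'
        exact (ih h1 t t' hZt).mp (h t ht)
      · intro h t ht
        obtain ⟨t', ht', hZt⟩ := (hZ.2 s s' hss).2.1 t ht
        exact (ih h1 t t' hZt).mpr (h t' ht')
  | dia φ ih =>
      intro hv s s' hss
      have h1 : ↑φ.vars ⊆ P := by simpa [Form.vars] using hv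
      simp only [Model.sat]
      constructor
      · rintro ⟨t, ht, hsat⟩
        obtain ⟨t', ht', hZt⟩ := (hZ.2 s s' hss).2.1 t ht
        exact ⟨t', ht', (ih h1 t t' hZt).mp hsat⟩
      · rintro ⟨t', ht', hsat⟩
        obtain ⟨t, ht, hZt⟩ := (hZ.2 s s' hss).2.2 t' ht'
        exact ⟨t, ht, (ih h1 t t' hZt).mpr hsat⟩

/-- Finite conjunction of a list of formulas. -/
def listAnd (L : List Form) : Form := L.foldr Form.and Form.top

lemma sat_listAnd (M : Model) (w : M.W) (L : List Form) :
    M.sat w (listAnd L) ↔ ∀ ψ ∈ L, M.sat w ψ := by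
  induction L with
  | nil => simp [listAnd, Model.sat]
  | cons a t ih =>
      show M.sat w (Form.and a (listAnd t)) ↔ _
      simp [Model.sat, ih]

lemma vars_listAnd {P : Set ℕ} (L : List Form) (h : ∀ ψ ∈ L, ↑ψ.vars ⊆ P) :
    ↑(listAnd L).vars ⊆ P := by
  induction L with
  | nil => simp [listAnd, Form.vars]
  | cons a t ih =>
      have ha := h a (by simp)
      have ht := ih (fun ψ hψ => h ψ (by simp [hψ]))
      intro x hx
      simp only [listAnd, List.foldr, Form.vars, Finset.coe_union, Set.mem_union,
        Finset.mem_coe] at hx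
      rcases hx with hx | hx
      · exact ha hx
      · exact ht hx

/-- Hennessy–Milner: the "forth" condition for modal equivalence on finite models. -/
lemma equiv_forth {P : Set ℕ} {M M' : Model} {s t : M.W} {s' : M'.W}
    (h : ∀ ψ : Form, ↑ψ.vars ⊆ P → (M.sat s ψ ↔ M'.sat s' ψ))
    (hst : M.R s t) :
    ∃ t', M'.R s' t' ∧ ∀ ψ : Form, ↑ψ.vars ⊆ P → (M.sat t ψ ↔ M'.sat t' ψ) := by
  by_contra hc
  push_neg at hc
  -- for each successor t' of s', choose a formula true at t and false at t'
  have key : ∀ t' : M'.W, M'.R s' t' →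
      ∃ χ : Form, ↑χ.vars ⊆ P ∧ M.sat t χ ∧ ¬ M'.sat t' χ := by
    intro t' ht'
    obtain ⟨ψ, hv, hne⟩ := hc t' ht'
    rcases hne with ⟨h1, h2⟩ | ⟨h1, h2⟩
    · exact ⟨ψ, hv, h1, h2⟩
    · refine ⟨ψ.neg, by rw [Form.vars_neg]; exact hv, ?_, ?_⟩
      · rw [Model.sat_neg]; exact h1
      · rw [Model.sat_neg]; exact not_not_intro h2
  choose f hf using key
  haveI : Fintype M'.W := @Fintype.ofFinite _ M'.finite
  let F : Finset M'.W := Finset.univ.filter (fun t' => M'.R s' t')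
  let L : List Form := F.toList.attach.map (fun x =>
    f x.1 (by
      have := x.2
      rw [Finset.mem_toList] at this
      exact (Finset.mem_filter.mp this).2))
  have hLvars : ∀ ψ ∈ L, ↑ψ.vars ⊆ P := by
    intro ψ hψ
    simp only [L, List.mem_map] at hψ
    obtain ⟨x, _, rfl⟩ := hψ
    exact (hf _ _).1
  have hLsat : M.sat t (listAnd L) := by
    rw [sat_listAnd]
    intro ψ hψ
    simp only [L, List.mem_map] at hψ
    obtain ⟨x, _, rfl⟩ := hψ
    exact (hf _ _).2.1
  have hdia : M.sat s (Form.dia (listAnd L)) := ⟨t, hst, hLsat⟩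
  have hvdia : ↑(Form.dia (listAnd L)).vars ⊆ P := by
    simpa [Form.vars] using vars_listAnd L hLvars
  have hdia' : M'.sat s' (Form.dia (listAnd L)) := (h _ hvdia).mp hdia
  obtain ⟨t', ht', hsat'⟩ := hdia'
  rw [sat_listAnd] at hsat'
  have hmem : f t' ht' ∈ L := by
    simp only [L, List.mem_map]
    refine ⟨⟨t', ?_⟩, List.mem_attach _ _, rfl⟩
    rw [Finset.mem_toList]
    exact Finset.mem_filter.mpr ⟨Finset.mem_univ _, ht'⟩
  exact (hf t' ht').2.2 (hsat' _ hmem)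

/-- φ is complete for l iff any two pointed models of φ for l
are bisimilar modulo P(φ). -/
theorem stmt1 (l : Logic) (φ : Form) :
    Complete l φ ↔
      ∀ (M M' : Model) (a : M.W) (a' : M'.W),
        M.IsFor l → M'.IsFor l → M.sat a φ → M'.sat a' φ →
        Bisimilar ↑φ.vars M a M' a' := by
  constructor
  · -- Complete → bisimilar
    intro hcomp M M' a a' hM hM' ha ha'
    -- modal equivalence relation
    refine ⟨fun s s' => ∀ ψ : Form, ↑ψ.vars ⊆ (↑φ.vars : Set ℕ) →
      (M.sat s ψ ↔ M'.sat s' ψ), ⟨⟨a, a', ?_⟩, ?_⟩, ?_⟩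
    · -- Z a a'
      intro ψ hv
      rcases hcomp ψ (Finset.coe_subset.mp hv) with hval | hval
      · have h1 := (M.sat_imp φ ψ a).mp (hval M hM a) ha
        have h2 := (M'.sat_imp φ ψ a').mp (hval M' hM' a') ha'
        exact ⟨fun _ => h2, fun _ => h1⟩
      · have h1 := (M.sat_imp φ ψ.neg a).mp (hval M hM a) ha
        have h2 := (M'.sat_imp φ ψ.neg a').mp (hval M' hM' a') ha'
        rw [Model.sat_neg] at h1 h2
        exact ⟨fun h => absurd h h1, fun h => absurd h h2⟩
    · -- Z is a bisimulation
      intro s s' hss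
      refine ⟨?_, ?_, ?_⟩
      · -- valuations agree on P(φ)
        ext x
        constructor
        · rintro ⟨hx, hxP⟩
          have hv : ↑(Form.pos x).vars ⊆ (↑φ.vars : Set ℕ) := by
            intro y hy; simp [Form.vars] at hy; subst hy; exact hxP
          exact ⟨(hss (Form.pos x) hv).mp hx, hxP⟩
        · rintro ⟨hx, hxP⟩
          have hv : ↑(Form.pos x).vars ⊆ (↑φ.vars : Set ℕ) := by
            intro y hy; simp [Form.vars] at hy; subst hy; exact hxP
          exact ⟨(hss (Form.pos x) hv).mpr hx, hxP⟩
      · -- forth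
        intro t hst
        exact equiv_forth hss hst
      · -- back
        intro t' hst'
        obtain ⟨t, ht, hequiv⟩ :=
          equiv_forth (M := M') (M' := M) (s := s') (s' := s) (t := t')
            (fun ψ hv => (hss ψ hv).symm) hst'
        exact ⟨t, ht, fun ψ hv => (hequiv ψ hv).symm⟩
    · -- Z relates a to a' (same as above)
      intro ψ hv
      rcases hcomp ψ (Finset.coe_subset.mp hv) with hval | hval
      · have h1 := (M.sat_imp φ ψ a).mp (hval M hM a) ha
        have h2 := (M'.sat_imp φ ψ a').mp (hval M' hM' a') ha'
        exact ⟨fun _ => h2, fun _ => h1⟩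
      · have h1 := (M.sat_imp φ ψ.neg a).mp (hval M hM a) ha
        have h2 := (M'.sat_imp φ ψ.neg a').mp (hval M' hM' a') ha'
        rw [Model.sat_neg] at h1 h2
        exact ⟨fun h => absurd h h1, fun h => absurd h h2⟩
  · -- bisimilar → Complete
    intro hbis ψ hv
    by_contra hc
    push_neg at hc
    obtain ⟨hn1, hn2⟩ := hc
    simp only [Valid, not_forall] at hn1 hn2
    obtain ⟨M, hM, a, hsa⟩ := hn1
    obtain ⟨M', hM', a', hsa'⟩ := hn2
    rw [M.sat_imp, Classical.not_imp] at hsa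
    rw [M'.sat_imp, Classical.not_imp, Model.sat_neg, not_not] at hsa'
    obtain ⟨haφ, haψ⟩ := hsa
    obtain ⟨haφ', haψ'⟩ := hsa'
    obtain ⟨Z, hZ, hZaa'⟩ := hbis M M' a a' hM hM' haφ haφ'
    exact haψ ((bisim_equiv hZ ψ (Finset.coe_subset.mpr hv) a a' hZaa').mpr haψ')
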